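/- Let M be an invertible real 3×3 matrix, 𝔚(w) = w/(1+|Mw|²)^{1/2}, and m ≥ 1. Then there exists N = N(M) > 0, independent of m, such that the matrix-valued map v ↦ (D𝔚)(𝔚⁻¹(v)), defined on 𝔚({|w| < m}), is differentiable and the norm of its derivative is bounded by N·m at every point of 𝔚({|w| < m}). -/

import Mathlib

/-!
STATEMENT 3: Let M be an invertible real 3×3 matrix, 𝔚(w) = w/(1+|Mw|²)^{1/2}, and
m ≥ 1. Then there exists N = N(M) > 0, independent of m, such that the matrix-valued
map v ↦ (D𝔚)(𝔚⁻¹(v)), defined on 𝔚({|w| < m}), is differentiable and the norm of its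
derivative is bounded by N·m at every point of 𝔚({|w| < m}).
(Here D𝔚 is the total derivative (Jacobian) of 𝔚, and 𝔚⁻¹(v) = v/(1−|Mv|²)^{1/2} is
the inverse of the restriction of 𝔚 to the ball {|w| < m}.)
-/

noncomputable section
open Real Matrix
open scoped ENNReal NNReal
open ContinuousLinearMap
open scoped RealInnerProductSpace

abbrev E3 : Type := EuclideanSpace ℝ (Fin 3)

def toE3 (v : Fin 3 → ℝ) : E3 := WithLp.toLp 2 v

/-- The map `𝔚(w) = w / (1 + |M w|²)^{1/2}`. -/
def frakW (M : Matrix (Fin 3) (Fin 3) ℝ) (w : E3) : E3 :=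
  (Real.sqrt (1 + ‖toE3 (M.mulVec w)‖ ^ 2))⁻¹ • w

/-- The inverse map `v ↦ v / (1 − |M v|²)^{1/2}`. -/
def invW (M : Matrix (Fin 3) (Fin 3) ℝ) (v : E3) : E3 :=
  (Real.sqrt (1 - ‖toE3 (M.mulVec v)‖ ^ 2))⁻¹ • v

def Acl (M : Matrix (Fin 3) (Fin 3) ℝ) : E3 →L[ℝ] E3 := Matrix.toEuclideanCLM (𝕜 := ℝ) M

lemma frakW_eq (M : Matrix (Fin 3) (Fin 3) ℝ) (w : E3) :
    frakW M w = (Real.sqrt (1 + ‖Acl M w‖ ^ 2))⁻¹ • w := rfl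
lemma invW_eq (M : Matrix (Fin 3) (Fin 3) ℝ) (v : E3) :
    invW M v = (Real.sqrt (1 - ‖Acl M v‖ ^ 2))⁻¹ • v := rfl

/-- generic derivative of frakW -/
lemma hasFDerivAt_frakW (M : Matrix (Fin 3) (Fin 3) ℝ) (w : E3) :
    HasFDerivAt (frakW M)
      ((Real.sqrt (1 + ‖Acl M w‖ ^ 2))⁻¹ • ContinuousLinearMap.id ℝ E3 +
        ((-(1 / (2 * Real.sqrt (1 + ‖Acl M w‖ ^ 2))) / Real.sqrt (1 + ‖Acl M w‖ ^ 2) ^ 2) •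
          ((fderivInnerCLM ℝ (Acl M w, Acl M w)).comp ((Acl M).prod (Acl M)))).smulRight w) w := by
  set A := Acl M
  have hA : HasFDerivAt (fun x : E3 => A x) A w := A.hasFDerivAt
  have hq : HasFDerivAt (fun x : E3 => ⟪A x, A x⟫)
      ((fderivInnerCLM ℝ (A w, A w)).comp (A.prod A)) w := hA.inner ℝ hA
  have h1q : HasFDerivAt (fun x : E3 => 1 + ⟪A x, A x⟫)
      ((fderivInnerCLM ℝ (A w, A w)).comp (A.prod A)) w := hq.const_add 1
  have hpos : (0:ℝ) < 1 + ⟪A w, A w⟫ := by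
    have : (0:ℝ) ≤ ⟪A w, A w⟫ := real_inner_self_nonneg
    linarith
  have hsqrtpos : 0 < Real.sqrt (1 + ⟪A w, A w⟫) := Real.sqrt_pos.2 hpos
  have hder : HasDerivAt (fun u : ℝ => (Real.sqrt u)⁻¹)
      (-(1 / (2 * Real.sqrt (1 + ⟪A w, A w⟫))) / Real.sqrt (1 + ⟪A w, A w⟫) ^ 2)
      (1 + ⟪A w, A w⟫) :=
    (Real.hasDerivAt_sqrt hpos.ne').inv hsqrtpos.ne'
  have hφ : HasFDerivAt (fun x : E3 => (Real.sqrt (1 + ⟪A x, A x⟫))⁻¹)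
      ((-(1 / (2 * Real.sqrt (1 + ⟪A w, A w⟫))) / Real.sqrt (1 + ⟪A w, A w⟫) ^ 2) •
        ((fderivInnerCLM ℝ (A w, A w)).comp (A.prod A))) w :=
    by have := hder.comp_hasFDerivAt w h1q; exact this
  have h := hφ.smul (hasFDerivAt_id w)
  have hfun : (fun x : E3 => (Real.sqrt (1 + ⟪A x, A x⟫))⁻¹ • x) = frakW M := by
    funext x
    rw [frakW_eq, real_inner_self_eq_norm_sq]
  simp only [_root_.id_eq] at h
  rw [show ((fun x : E3 => (Real.sqrt (1 + ⟪A x, A x⟫))⁻¹) • id) = frakW M from hfun] at h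
  rw [real_inner_self_eq_norm_sq] at h
  exact h

def Jmap (M : Matrix (Fin 3) (Fin 3) ℝ) : E3 →L[ℝ] E3 →L[ℝ] ℝ :=
  ((ContinuousLinearMap.compL ℝ E3 E3 ℝ).flip (Acl M)).comp ((innerSL ℝ (E := E3)).comp (Acl M))

def Lmap (M : Matrix (Fin 3) (Fin 3) ℝ) : E3 →L[ℝ] E3 →L[ℝ] E3 →L[ℝ] E3 :=
  (ContinuousLinearMap.smulRightL ℝ E3 E3).comp (Jmap M)

lemma Lmap_apply (M : Matrix (Fin 3) (Fin 3) ℝ) (a b x : E3) :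
    Lmap M a b x = ⟪Acl M a, Acl M x⟫ • b := rfl

lemma Lmap_norm_le (M : Matrix (Fin 3) (Fin 3) ℝ) (a b : E3) :
    ‖Lmap M a b‖ ≤ ‖Acl M a‖ * ‖Acl M‖ * ‖b‖ := by
  refine ContinuousLinearMap.opNorm_le_bound _ (by positivity) fun x => ?_
  rw [Lmap_apply, norm_smul]
  have h1 : |⟪Acl M a, Acl M x⟫| ≤ ‖Acl M a‖ * ‖Acl M x‖ := abs_real_inner_le_norm _ _
  have h2 : ‖Acl M x‖ ≤ ‖Acl M‖ * ‖x‖ := (Acl M).le_opNorm x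
  have : ‖(⟪Acl M a, Acl M x⟫ : ℝ)‖ = |⟪Acl M a, Acl M x⟫| := rfl
  rw [this]
  have h3 : |⟪Acl M a, Acl M x⟫| ≤ ‖Acl M a‖ * (‖Acl M‖ * ‖x‖) := h1.trans (by gcongr)
  calc |⟪Acl M a, Acl M x⟫| * ‖b‖ ≤ (‖Acl M a‖ * (‖Acl M‖ * ‖x‖)) * ‖b‖ :=
        mul_le_mul_of_nonneg_right h3 (norm_nonneg b)
    _ = ‖Acl M a‖ * ‖Acl M‖ * ‖b‖ * ‖x‖ := by ring

def Phi (M : Matrix (Fin 3) (Fin 3) ℝ) (v : E3) : E3 →L[ℝ] E3 :=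
  Real.sqrt (1 - ‖Acl M v‖ ^ 2) • (ContinuousLinearMap.id ℝ E3 - Lmap M v v)


lemma hasFDerivAt_frakW_Phi (M : Matrix (Fin 3) (Fin 3) ℝ) (v : E3) (hv : ‖Acl M v‖ < 1) :
    HasFDerivAt (frakW M) (Phi M v) (invW M v) := by
  have h := hasFDerivAt_frakW M (invW M v)
  have h0 : (0:ℝ) ≤ ‖Acl M v‖ := norm_nonneg _
  have hlt : 0 < 1 - ‖Acl M v‖ ^ 2 := by nlinarith
  set hh := Real.sqrt (1 - ‖Acl M v‖ ^ 2) with hhdef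
  have hhpos : 0 < hh := Real.sqrt_pos.2 hlt
  have hh2 : hh ^ 2 = 1 - ‖Acl M v‖ ^ 2 := Real.sq_sqrt hlt.le
  have hw : invW M v = hh⁻¹ • v := invW_eq M v
  have hAw : Acl M (invW M v) = hh⁻¹ • Acl M v := by
    rw [hw]; exact (Acl M).map_smul _ _
  have hnw : ‖Acl M (invW M v)‖ ^ 2 = (hh⁻¹) ^ 2 * ‖Acl M v‖ ^ 2 := by
    rw [hAw, norm_smul]
    rw [Real.norm_eq_abs, abs_of_pos (inv_pos.2 hhpos)]
    ring
  have key1 : 1 + ‖Acl M (invW M v)‖ ^ 2 = (hh ^ 2)⁻¹ := by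
    have hv2 : ‖Acl M v‖ ^ 2 = 1 - hh ^ 2 := by linarith
    rw [hnw, hv2]
    field_simp
    ring
  have key2 : Real.sqrt (1 + ‖Acl M (invW M v)‖ ^ 2) = hh⁻¹ := by
    rw [key1, Real.sqrt_inv, Real.sqrt_sq hhpos.le]
  refine h.congr_fderiv ?_
  refine ContinuousLinearMap.ext fun x => ?_
  simp only [ContinuousLinearMap.add_apply, ContinuousLinearMap.coe_smul', Pi.smul_apply,
    ContinuousLinearMap.smulRight_apply, ContinuousLinearMap.coe_id', id_eq,
    ContinuousLinearMap.comp_apply, ContinuousLinearMap.prod_apply, fderivInnerCLM_apply,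
    Phi, Lmap_apply, ContinuousLinearMap.coe_sub', Pi.sub_apply]
  rw [key2, hAw, hw]
  simp only [real_inner_smul_left, real_inner_smul_right]
  rw [real_inner_comm (Acl M x) (Acl M v)]
  set ip := ⟪Acl M v, Acl M x⟫ with hip
  match_scalars
  · field_simp
    exact hhdef
  · field_simp
    rw [← hhdef]
    rw [smul_eq_mul, neg_mul, neg_inj, div_mul_div_comm,
      div_eq_iff (mul_ne_zero two_ne_zero hhpos.ne')]
    ring

private lemma aux_real (s k d e nA nAv nv : ℝ) (hs : 0 < s) (hs1 : s ≤ 1)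
    (hk0 : 0 ≤ k) (hd0 : 0 ≤ d) (he0 : 0 ≤ e) (hA0 : 0 ≤ nA) (hAv0 : 0 ≤ nAv) (hv0 : 0 ≤ nv)
    (hk : k ≤ nA * nAv + nA ^ 2 * nv) (hd : d ≤ 2 * nAv * nA) (he : e ≤ 1 + nAv * nA * nv) :
    s * k + 1 / (2 * s) * d * e ≤ nA * nAv + nA ^ 2 * nv + nAv / s * nA * (1 + nAv * nA * nv) := by
  have h1 : s * k ≤ nA * nAv + nA ^ 2 * nv := by nlinarith
  have h2 : d * e ≤ 2 * nAv * nA * (1 + nAv * nA * nv) := by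
    nlinarith [mul_le_mul hd he he0 (by positivity : (0:ℝ) ≤ 2 * nAv * nA)]
  have h3 : 1 / (2 * s) * d * e = d * e / (2 * s) := by ring
  have h4 : d * e / (2 * s) ≤ 2 * nAv * nA * (1 + nAv * nA * nv) / (2 * s) := by gcongr
  have h5 : 2 * nAv * nA * (1 + nAv * nA * nv) / (2 * s) = nAv / s * nA * (1 + nAv * nA * nv) := by
    field_simp
  linarith

set_option maxHeartbeats 1000000 in
lemma exists_hasFDerivAt_Phi (M : Matrix (Fin 3) (Fin 3) ℝ) (v : E3) (hv : ‖Acl M v‖ < 1) :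
    ∃ D : E3 →L[ℝ] E3 →L[ℝ] E3, HasFDerivAt (Phi M) D v ∧
      ‖D‖ ≤ ‖Acl M‖ * ‖Acl M v‖ + ‖Acl M‖ ^ 2 * ‖v‖ +
        (‖Acl M v‖ / Real.sqrt (1 - ‖Acl M v‖ ^ 2)) * ‖Acl M‖ *
          (1 + ‖Acl M v‖ * ‖Acl M‖ * ‖v‖) := by
  set A := Acl M with hA
  have h0 : (0:ℝ) ≤ ‖A v‖ := norm_nonneg _
  have hlt : 0 < 1 - ‖A v‖ ^ 2 := by nlinarith
  have hApos : (0:ℝ) ≤ ‖A‖ := norm_nonneg _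
  -- derivative of K v = Lmap v v
  have hb := (Lmap M).isBoundedBilinearMap.hasFDerivAt (v, v)
  have hp : HasFDerivAt (fun y : E3 => (y, y))
      ((ContinuousLinearMap.id ℝ E3).prod (ContinuousLinearMap.id ℝ E3)) v :=
    HasFDerivAt.prodMk (hasFDerivAt_id v) (hasFDerivAt_id v)
  have hK : HasFDerivAt (fun y : E3 => Lmap M y y)
      (((Lmap M).isBoundedBilinearMap.deriv (v, v)).comp
        ((ContinuousLinearMap.id ℝ E3).prod (ContinuousLinearMap.id ℝ E3))) v :=
    HasFDerivAt.comp (g := fun p : E3 × E3 => Lmap M p.1 p.2) (f := fun y : E3 => (y, y)) v hb hp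
  set K' := ((Lmap M).isBoundedBilinearMap.deriv (v, v)).comp
      ((ContinuousLinearMap.id ℝ E3).prod (ContinuousLinearMap.id ℝ E3)) with hK'def
  have hΨ : HasFDerivAt (fun y : E3 => ContinuousLinearMap.id ℝ E3 - Lmap M y y) (-K') v :=
    hK.const_sub _
  -- derivative of the scalar factor
  have hAd : HasFDerivAt (fun x : E3 => A x) A v := A.hasFDerivAt
  have hq : HasFDerivAt (fun x : E3 => ⟪A x, A x⟫)
      ((fderivInnerCLM ℝ (A v, A v)).comp (A.prod A)) v := hAd.inner ℝ hAd
  set D1 := (fderivInnerCLM ℝ (A v, A v)).comp (A.prod A) with hD1def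
  have h1q : HasFDerivAt (fun x : E3 => 1 - ⟪A x, A x⟫) (-D1) v := by
    simpa using hq.const_sub 1
  have hti : (1 : ℝ) - ⟪A v, A v⟫ = 1 - ‖A v‖ ^ 2 := by rw [real_inner_self_eq_norm_sq]
  have hders : HasDerivAt Real.sqrt (1 / (2 * Real.sqrt (1 - ⟪A v, A v⟫))) (1 - ⟪A v, A v⟫) :=
    Real.hasDerivAt_sqrt (by rw [hti]; exact hlt.ne')
  have hsc : HasFDerivAt (fun x : E3 => Real.sqrt (1 - ⟪A x, A x⟫))
      ((1 / (2 * Real.sqrt (1 - ⟪A v, A v⟫))) • (-D1)) v := hders.comp_hasFDerivAt v h1q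
  have hPhi := hsc.smul hΨ
  have hfun : (fun x : E3 => Real.sqrt (1 - ⟪A x, A x⟫) •
      (ContinuousLinearMap.id ℝ E3 - Lmap M x x)) = Phi M := by
    funext x
    rw [Phi, real_inner_self_eq_norm_sq]
  rw [show ((fun x : E3 => Real.sqrt (1 - ⟪A x, A x⟫)) • fun y : E3 => ContinuousLinearMap.id ℝ E3 - Lmap M y y) = Phi M from hfun, hti] at hPhi
  refine ⟨_, hPhi, ?_⟩
  -- now the norm bound
  have hsqrtpos : 0 < Real.sqrt (1 - ‖A v‖ ^ 2) := Real.sqrt_pos.2 hlt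
  have hsqrtle : Real.sqrt (1 - ‖A v‖ ^ 2) ≤ 1 := Real.sqrt_le_one.mpr (by nlinarith)
  have hK'le : ‖K'‖ ≤ ‖A‖ * ‖A v‖ + ‖A‖ ^ 2 * ‖v‖ := by
    refine ContinuousLinearMap.opNorm_le_bound _ (by positivity) fun u => ?_
    have hKu : K' u = Lmap M v u + Lmap M u v := by
      rw [hK'def]
      simp only [ContinuousLinearMap.comp_apply, ContinuousLinearMap.prod_apply,
        ContinuousLinearMap.coe_id', id_eq]
      exact (Lmap M).isBoundedBilinearMap.deriv_apply (v, v) (u, u)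
    rw [hKu]
    have h1 := Lmap_norm_le M v u
    have h2 := Lmap_norm_le M u v
    have h3 : ‖Acl M u‖ ≤ ‖Acl M‖ * ‖u‖ := (Acl M).le_opNorm u
    calc ‖Lmap M v u + Lmap M u v‖ ≤ ‖Lmap M v u‖ + ‖Lmap M u v‖ := norm_add_le _ _
      _ ≤ ‖A v‖ * ‖A‖ * ‖u‖ + (‖A‖ * ‖u‖) * ‖A‖ * ‖v‖ := by
          refine add_le_add h1 (h2.trans ?_)
          gcongr
      _ = (‖A‖ * ‖A v‖ + ‖A‖ ^ 2 * ‖v‖) * ‖u‖ := by ring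
  have hD1le : ‖D1‖ ≤ 2 * ‖A v‖ * ‖A‖ := by
    refine ContinuousLinearMap.opNorm_le_bound _ (by positivity) fun u => ?_
    have hDu : D1 u = ⟪A v, A u⟫ + ⟪A u, A v⟫ := by
      rw [hD1def]; rfl
    rw [hDu]
    have h1 : |⟪A v, A u⟫| ≤ ‖A v‖ * ‖A u‖ := abs_real_inner_le_norm _ _
    have h2 : |⟪A u, A v⟫| ≤ ‖A u‖ * ‖A v‖ := abs_real_inner_le_norm _ _
    have h3 : ‖A u‖ ≤ ‖A‖ * ‖u‖ := A.le_opNorm u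
    have h4 : ‖⟪A v, A u⟫ + ⟪A u, A v⟫‖ ≤ |⟪A v, A u⟫| + |⟪A u, A v⟫| := norm_add_le _ _
    nlinarith [norm_nonneg u, norm_nonneg (A u)]
  have hIdK : ‖ContinuousLinearMap.id ℝ E3 - Lmap M v v‖ ≤ 1 + ‖A v‖ * ‖A‖ * ‖v‖ := by
    calc ‖ContinuousLinearMap.id ℝ E3 - Lmap M v v‖
        ≤ ‖ContinuousLinearMap.id ℝ E3‖ + ‖Lmap M v v‖ := norm_sub_le _ _
      _ ≤ 1 + ‖A v‖ * ‖A‖ * ‖v‖ := add_le_add norm_id_le (Lmap_norm_le M v v)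
  refine le_trans (ContinuousLinearMap.opNorm_add_le _ _) ?_
  have hn1 : ‖Real.sqrt (1 - ‖A v‖ ^ 2) • -K'‖ ≤ Real.sqrt (1 - ‖A v‖ ^ 2) * ‖K'‖ := by
    refine le_trans (ContinuousLinearMap.opNorm_smul_le _ _) ?_
    rw [norm_neg, Real.norm_eq_abs, abs_of_pos hsqrtpos]
  have hn2 : ‖(1 / (2 * Real.sqrt (1 - ‖A v‖ ^ 2))) • -D1‖ ≤
      (1 / (2 * Real.sqrt (1 - ‖A v‖ ^ 2))) * ‖D1‖ := by
    refine le_trans (ContinuousLinearMap.opNorm_smul_le _ _) ?_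
    rw [norm_neg, Real.norm_eq_abs,
      abs_of_pos (show (0:ℝ) < 1 / (2 * Real.sqrt (1 - ‖A v‖ ^ 2)) by positivity)]
  have hn3 : ‖((1 / (2 * Real.sqrt (1 - ‖A v‖ ^ 2))) • -D1).smulRight
      (ContinuousLinearMap.id ℝ E3 - Lmap M v v)‖ ≤
      (1 / (2 * Real.sqrt (1 - ‖A v‖ ^ 2))) * ‖D1‖ *
        ‖ContinuousLinearMap.id ℝ E3 - Lmap M v v‖ := by
    rw [ContinuousLinearMap.norm_smulRight_apply]
    exact mul_le_mul_of_nonneg_right hn2 (norm_nonneg _)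
  refine le_trans (add_le_add hn1 hn3) ?_
  have hfinal := aux_real (Real.sqrt (1 - ‖A v‖ ^ 2)) ‖K'‖ ‖D1‖
    ‖ContinuousLinearMap.id ℝ E3 - Lmap M v v‖ ‖A‖ ‖A v‖ ‖v‖
    hsqrtpos hsqrtle (norm_nonneg _) (norm_nonneg _) (norm_nonneg _) hApos h0 (norm_nonneg _)
    hK'le hD1le hIdK
  linarith

lemma frakW_facts (M : Matrix (Fin 3) (Fin 3) ℝ) (w : E3) :
    ‖Acl M (frakW M w)‖ < 1 ∧ invW M (frakW M w) = w ∧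
      ‖Acl M (frakW M w)‖ = ‖Acl M w‖ * Real.sqrt (1 - ‖Acl M (frakW M w)‖ ^ 2) := by
  set A := Acl M with hA
  have hs0 : (0:ℝ) ≤ ‖A w‖ ^ 2 := by positivity
  have hr1 : (1:ℝ) ≤ 1 + ‖A w‖ ^ 2 := by linarith
  set r := Real.sqrt (1 + ‖A w‖ ^ 2) with hrdef
  have hrpos : 0 < r := Real.sqrt_pos.2 (by linarith)
  have hr2 : r ^ 2 = 1 + ‖A w‖ ^ 2 := Real.sq_sqrt (by linarith)
  have hv : frakW M w = r⁻¹ • w := frakW_eq M w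
  have hAv : A (frakW M w) = r⁻¹ • A w := by rw [hv]; exact A.map_smul _ _
  have hAv2 : ‖A (frakW M w)‖ ^ 2 = ‖A w‖ ^ 2 / (1 + ‖A w‖ ^ 2) := by
    rw [hAv, norm_smul, Real.norm_eq_abs, abs_of_pos (inv_pos.2 hrpos), mul_pow]
    rw [inv_pow, hr2]
    ring
  have h1m : 1 - ‖A (frakW M w)‖ ^ 2 = 1 / (1 + ‖A w‖ ^ 2) := by
    rw [hAv2]
    field_simp
    ring
  have hAvlt : ‖A (frakW M w)‖ < 1 := by
    have h2 : ‖A (frakW M w)‖ ^ 2 < 1 := by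
      rw [hAv2, div_lt_one (by linarith)]
      linarith
    nlinarith [norm_nonneg (A (frakW M w))]
  have hsq : Real.sqrt (1 - ‖A (frakW M w)‖ ^ 2) = r⁻¹ := by
    rw [h1m, one_div, Real.sqrt_inv, hrdef]
  refine ⟨hAvlt, ?_, ?_⟩
  · rw [invW_eq, ← hA, hsq, hv, inv_inv, smul_smul, mul_inv_cancel₀ hrpos.ne', one_smul]
  · rw [hsq, hAv, norm_smul, Real.norm_eq_abs, abs_of_pos (inv_pos.2 hrpos)]
    ring

lemma left_inv_Acl (M : Matrix (Fin 3) (Fin 3) ℝ) (hM : IsUnit M) (x : E3) :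
    Acl M⁻¹ (Acl M x) = x := by
  have hdet : IsUnit M.det := (Matrix.isUnit_iff_isUnit_det M).mp hM
  have hmul : M⁻¹ * M = 1 := Matrix.nonsing_inv_mul M hdet
  have h1 : Acl M⁻¹ * Acl M = 1 := by
    rw [Acl, Acl, ← _root_.map_mul (Matrix.toEuclideanCLM (𝕜 := ℝ)) M⁻¹ M, hmul, _root_.map_one]
  calc Acl M⁻¹ (Acl M x) = (Acl M⁻¹ * Acl M) x := (ContinuousLinearMap.mul_apply _ _ _).symm
    _ = x := by rw [h1]; rfl


set_option maxHeartbeats 1000000 in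
theorem stmt_3 (M : Matrix (Fin 3) (Fin 3) ℝ) (hM : IsUnit M) :
    ∃ N > (0 : ℝ), ∀ m : ℝ, 1 ≤ m →
      ∀ v ∈ frakW M '' Metric.ball (0 : E3) m,
        DifferentiableAt ℝ (fun v' => fderiv ℝ (frakW M) (invW M v')) v ∧
        ‖fderiv ℝ (fun v' => fderiv ℝ (frakW M) (invW M v')) v‖ ≤ N * m := by
  set A := Acl M with hA
  set B := Acl M⁻¹ with hB
  have hApos : (0:ℝ) ≤ ‖A‖ := norm_nonneg _
  have hBpos : (0:ℝ) ≤ ‖B‖ := norm_nonneg _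
  refine ⟨‖A‖ + ‖A‖ ^ 2 * ‖B‖ + ‖A‖ ^ 2 * (1 + ‖A‖ * ‖B‖) + 1, by positivity, ?_⟩
  intro m hm v hv
  obtain ⟨w, hwball, rfl⟩ := hv
  have hwm : ‖w‖ < m := by simpa using mem_ball_zero_iff.mp hwball
  obtain ⟨hAvlt, hinv, hAveq⟩ := frakW_facts M w
  set v := frakW M w with hvdef
  obtain ⟨D, hD, hDle⟩ := exists_hasFDerivAt_Phi M v hAvlt
  have hU : IsOpen {v' : E3 | ‖A v'‖ < 1} := by
    have hc : Continuous fun v' : E3 => ‖A v'‖ := A.continuous.norm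
    exact isOpen_lt hc continuous_const
  have hmem : {v' : E3 | ‖A v'‖ < 1} ∈ nhds v := hU.mem_nhds hAvlt
  have heq : (fun v' => fderiv ℝ (frakW M) (invW M v')) =ᶠ[nhds v] Phi M :=
    Filter.eventuallyEq_of_mem hmem fun v' hv' => (hasFDerivAt_frakW_Phi M v' hv').fderiv
  have hdiff : DifferentiableAt ℝ (fun v' => fderiv ℝ (frakW M) (invW M v')) v :=
    hD.differentiableAt.congr_of_eventuallyEq heq
  refine ⟨hdiff, ?_⟩
  have hfd : fderiv ℝ (fun v' => fderiv ℝ (frakW M) (invW M v')) v = D := by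
    rw [heq.fderiv_eq, hD.fderiv]
  rw [hfd]
  -- estimates
  have hsqrtpos : 0 < Real.sqrt (1 - ‖A v‖ ^ 2) := by
    refine Real.sqrt_pos.2 ?_
    nlinarith [norm_nonneg (A v)]
  have hvB : ‖v‖ ≤ ‖B‖ := by
    have h1 : ‖v‖ ≤ ‖B‖ * ‖A v‖ := by
      calc ‖v‖ = ‖B (A v)‖ := by rw [left_inv_Acl M hM v]
        _ ≤ ‖B‖ * ‖A v‖ := B.le_opNorm _
    nlinarith [norm_nonneg (A v)]
  have hAwm : ‖A w‖ ≤ ‖A‖ * m := by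
    calc ‖A w‖ ≤ ‖A‖ * ‖w‖ := A.le_opNorm w
      _ ≤ ‖A‖ * m := mul_le_mul_of_nonneg_left hwm.le hApos
  have hquot : ‖A v‖ / Real.sqrt (1 - ‖A v‖ ^ 2) = ‖A w‖ := by
    rw [div_eq_iff hsqrtpos.ne']
    exact hAveq
  rw [hquot] at hDle
  have hm0 : (0:ℝ) ≤ m := by linarith
  calc ‖D‖ ≤ ‖A‖ * ‖A v‖ + ‖A‖ ^ 2 * ‖v‖ + ‖A w‖ * ‖A‖ * (1 + ‖A v‖ * ‖A‖ * ‖v‖) := hDle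
    _ ≤ ‖A‖ * 1 + ‖A‖ ^ 2 * ‖B‖ + (‖A‖ * m) * ‖A‖ * (1 + 1 * ‖A‖ * ‖B‖) := by
        gcongr <;> first
          | exact hAvlt.le
          | exact hvB
          | exact hAwm
    _ ≤ (‖A‖ + ‖A‖ ^ 2 * ‖B‖ + ‖A‖ ^ 2 * (1 + ‖A‖ * ‖B‖) + 1) * m := by
        have h1 : ‖A‖ ≤ ‖A‖ * m := le_mul_of_one_le_right hApos hm
        have h2 : ‖A‖ ^ 2 * ‖B‖ ≤ ‖A‖ ^ 2 * ‖B‖ * m :=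
          le_mul_of_one_le_right (by positivity) hm
        nlinarith [hApos, hBpos, hm0]
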